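/- Suppose n ≥ 2 and m_1 = k − p for some integer p with 1 ≤ p ≤ k. Then there exist invertible complex matrices P and Q such that P · A_k(m) · Q equals the block upper bidiagonal matrix (with the same block sizes as A_k(m)) whose diagonal block in position (s,s) is the identity matrix for every s ≠ p and the zero matrix for s = p, whose superdiagonal block in position (s,s+1) is A_s(m^1) for s = 1,…,k, and whose remaining blocks are zero; here m^1 = (m_2,…,m_n). -/

import Mathlib

open Finsupp

/-- Multiindices `J : Fin n → ℕ` of total degree `j`. -/
abbrev MIdx (n j : ℕ) : Type := {J : Fin n → ℕ // ∑ i, J i = j}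

/-- The complex vector space `V_j` with basis `{e_J : |J| = j}`. -/
abbrev V (n j : ℕ) : Type := MIdx n j →₀ ℂ

/-- `J + 1ᵢ` : the multiindex `J` with its `i`-th entry increased by 1. -/
def incr {n : ℕ} (J : Fin n → ℕ) (i : Fin n) : Fin n → ℕ :=
  Function.update J i (J i + 1)

lemma sum_incr {n : ℕ} (J : Fin n → ℕ) (i : Fin n) :
    ∑ x, incr J i x = (∑ x, J x) + 1 := by
  unfold incr
  rw [Finset.sum_update_of_mem (Finset.mem_univ i),
    Finset.sum_eq_sum_sdiff_singleton_add (Finset.mem_univ i) J]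
  ring

/-- The map `f_{j+1,m} : V_j → V_{j+1}`, `e_J ↦ ∑ᵢ (jᵢ+1)(mᵢ−jᵢ) e_{J+1ᵢ}`. -/
noncomputable def fMap (n : ℕ) (m : Fin n → ℕ) (j : ℕ) : V n j →ₗ[ℂ] V n (j + 1) :=
  Finsupp.lift (V n (j + 1)) ℂ (MIdx n j) fun J =>
    ∑ i, (((J.1 i : ℂ) + 1) * ((m i : ℂ) - (J.1 i : ℂ))) •
      Finsupp.single (⟨incr J.1 i, by rw [sum_incr, J.2]⟩ : MIdx n (j + 1)) (1 : ℂ)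

/-- `d(m,j)`: the number of multiindices `J` with `J i ≤ m i` for all `i` and `|J| = j`. -/
noncomputable def dCount (n : ℕ) (m : Fin n → ℕ) (j : ℤ) : ℕ :=
  Set.ncard {J : Fin n → ℕ | (∀ i, J i ≤ m i) ∧ ∑ i, (J i : ℤ) = j}

/-- `w(m,j) = d(m,j) − d(m,j−1)`. -/
noncomputable def w (n : ℕ) (m : Fin n → ℕ) (j : ℤ) : ℤ :=
  (dCount n m j : ℤ) - (dCount n m (j - 1) : ℤ)
/-- The matrix `A_{j+1}(m)` of `f_{j+1,m} : V_j → V_{j+1}` with respect to the bases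
`{e_J}`, acting on row vectors: rows are indexed by the domain basis, columns by the
codomain basis, and `A J I` is the coefficient of `e_I` in `f(e_J)`.  (With respect to the
lexicographic order on multiindices this is exactly the matrix of the paper.) -/
noncomputable def Amat (n : ℕ) (m : Fin n → ℕ) (j : ℕ) :
    Matrix (MIdx n j) (MIdx n (j + 1)) ℂ :=
  Matrix.of fun J I => fMap n m j (Finsupp.single J 1) I

lemma MIdx.le (n j : ℕ) (J : MIdx n j) (i : Fin n) : J.1 i ≤ j := by
  calc J.1 i ≤ ∑ x, J.1 x :=
    Finset.single_le_sum (fun _ _ => Nat.zero_le _) (Finset.mem_univ i)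
  _ = j := J.2

instance MIdx.finite (n j : ℕ) : Finite (MIdx n j) := by
  apply Finite.of_injective
    (fun J : MIdx n j => fun i => (⟨J.1 i, Nat.lt_succ_of_le (MIdx.le n j J i)⟩ : Fin (j + 1)))
  intro J K h
  exact Subtype.ext (funext fun i => by simpa using congrFun h i)

noncomputable instance MIdx.fintype (n j : ℕ) : Fintype (MIdx n j) :=
  Fintype.ofFinite _

lemma incr_apply {n : ℕ} (J : Fin n → ℕ) (i x : Fin n) :
    incr J i x = if x = i then J x + 1 else J x := by
  unfold incr
  rw [Function.update_apply]
  split <;> simp_all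

lemma Amat_apply (n : ℕ) (m : Fin n → ℕ) (j : ℕ) (J : MIdx n j) (I : MIdx n (j + 1)) :
    Amat n m j J I
      = ∑ i, (((J.1 i : ℂ) + 1) * ((m i : ℂ) - (J.1 i : ℂ)))
          * (if incr J.1 i = I.1 then 1 else 0) := by
  simp only [Amat, fMap, Matrix.of_apply, Finsupp.lift_apply]
  rw [Finsupp.sum_single_index (by simp)]
  simp only [one_smul, Finsupp.finset_sum_apply, Finsupp.smul_apply,
    Finsupp.single_apply, smul_eq_mul, mul_one]
  refine Finset.sum_congr rfl fun i _ => ?_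
  simp only [Subtype.ext_iff]

noncomputable def ee (m0 : ℕ) : ℕ → ℂ
  | 0 => 1
  | (j+1) => if j = m0 then 1 else ee m0 j / (((j:ℂ)+1) * ((m0:ℂ) - (j:ℂ)))

lemma coef_ne_zero {m0 j : ℕ} (h : j ≠ m0) : ((j:ℂ)+1) * ((m0:ℂ) - (j:ℂ)) ≠ 0 :=
  mul_ne_zero (Nat.cast_add_one_ne_zero j)
    (sub_ne_zero.2 fun hc => h (Nat.cast_injective hc).symm)

lemma ee_ne_zero (m0 j : ℕ) : ee m0 j ≠ 0 := by
  induction j with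
  | zero => simp [ee]
  | succ j ih =>
    rw [ee]
    split
    · exact one_ne_zero
    · exact div_ne_zero ih (coef_ne_zero ‹_›)

lemma ee_identity {m0 j : ℕ} (h : j ≠ m0) :
    (ee m0 j)⁻¹ * (((j:ℂ)+1) * ((m0:ℂ) - (j:ℂ))) * ee m0 (j+1) = 1 := by
  have he := ee_ne_zero m0 j
  have hc := coef_ne_zero h
  rw [ee, if_neg h]
  field_simp
  exact div_self (right_ne_zero_of_mul hc)

lemma incr_zero_iff {n : ℕ} (J I : Fin (n+1) → ℕ) (h0 : I 0 = J 0 + 1) :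
    incr J 0 = I ↔ Fin.tail J = Fin.tail I := by
  constructor
  · intro h
    funext y
    have := congrFun h y.succ
    rw [incr_apply, if_neg (Fin.succ_ne_zero y)] at this
    simpa [Fin.tail] using this
  · intro h
    funext x
    induction x using Fin.cases with
    | zero => rw [incr_apply, if_pos rfl, h0]
    | succ y =>
      have := congrFun h y
      rw [incr_apply, if_neg (Fin.succ_ne_zero y)]
      simpa [Fin.tail] using this

lemma incr_succ_iff {n : ℕ} (J I : Fin (n+1) → ℕ) (t : Fin n) (h0 : I 0 = J 0) :
    incr J t.succ = I ↔ incr (Fin.tail J) t = Fin.tail I := by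
  constructor
  · intro h
    funext y
    have := congrFun h y.succ
    rw [incr_apply] at this
    rw [incr_apply]
    simp only [Fin.tail, Fin.succ_inj] at this ⊢
    exact this
  · intro h
    funext x
    induction x using Fin.cases with
    | zero =>
      rw [incr_apply, if_neg (fun e => Fin.succ_ne_zero t e.symm)]
      exact h0.symm
    | succ y =>
      have := congrFun h y
      rw [incr_apply] at this
      rw [incr_apply]
      simp only [Fin.tail, Fin.succ_inj] at this ⊢
      exact this
set_option maxHeartbeats 1600000 in
theorem Amat_row_col_equiv (n k p : ℕ) (hn : 1 ≤ n) (hk : 1 ≤ k) (m : Fin (n + 1) → ℕ)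
    (hp1 : 1 ≤ p) (hpk : p ≤ k) (hm : m 0 = k - p) :
    ∃ (P : Matrix (MIdx (n + 1) (k - 1)) (MIdx (n + 1) (k - 1)) ℂ)
      (Q : Matrix (MIdx (n + 1) (k - 1 + 1)) (MIdx (n + 1) (k - 1 + 1)) ℂ),
      IsUnit P ∧ IsUnit Q ∧
      P * Amat (n + 1) m (k - 1) * Q
        = Matrix.of fun (J : MIdx (n + 1) (k - 1)) (I : MIdx (n + 1) (k - 1 + 1)) =>
            if I.1 0 = J.1 0 + 1 then
              (if J.1 0 = m 0 then 0 else if Fin.tail J.1 = Fin.tail I.1 then 1 else 0)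
            else if h : I.1 0 = J.1 0 then
              Amat n (Fin.tail m) (k - 1 - J.1 0)
                ⟨Fin.tail J.1, by
                  have hJ := J.2
                  rw [Fin.sum_univ_succ] at hJ
                  simp only [Fin.tail]
                  omega⟩
                ⟨Fin.tail I.1, by
                  have hle : J.1 0 ≤ k - 1 := MIdx.le _ _ J 0
                  have hI := I.2
                  rw [Fin.sum_univ_succ] at hI
                  simp only [Fin.tail]
                  omega⟩
            else 0 := by
  refine ⟨Matrix.diagonal (fun J => (ee (m 0) (J.1 0))⁻¹),
    Matrix.diagonal (fun I => ee (m 0) (I.1 0)), ?_, ?_, ?_⟩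
  · rw [Matrix.isUnit_iff_isUnit_det, Matrix.det_diagonal]
    exact isUnit_iff_ne_zero.2
      (Finset.prod_ne_zero_iff.2 fun J _ => inv_ne_zero (ee_ne_zero _ _))
  · rw [Matrix.isUnit_iff_isUnit_det, Matrix.det_diagonal]
    exact isUnit_iff_ne_zero.2 (Finset.prod_ne_zero_iff.2 fun I _ => ee_ne_zero _ _)
  · ext J I
    simp only [Matrix.mul_diagonal, Matrix.diagonal_mul, Matrix.of_apply]
    rw [Amat_apply]
    by_cases h1 : I.1 0 = J.1 0 + 1
    · rw [if_pos h1, Fin.sum_univ_succ]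
      rw [Finset.sum_eq_zero (fun t _ => by
        rw [if_neg, mul_zero]
        intro hc
        have h := congrFun hc 0
        rw [incr_apply, if_neg (fun e => Fin.succ_ne_zero t e.symm)] at h
        omega)]
      simp only [incr_zero_iff J.1 I.1 h1]
      by_cases h2 : J.1 0 = m 0
      · rw [if_pos h2]
        have hz : ((m 0 : ℂ) - (J.1 0 : ℂ)) = 0 := by rw [h2]; ring
        simp [hz]
      · rw [if_neg h2]
        by_cases h3 : Fin.tail J.1 = Fin.tail I.1
        · rw [if_pos h3, h1]
          have := ee_identity (m0 := m 0) (j := J.1 0) (fun e => h2 (by omega))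
          push_cast at this ⊢
          linear_combination this
        · rw [if_neg h3]
          simp
    · rw [if_neg h1]
      by_cases h2 : I.1 0 = J.1 0
      · rw [dif_pos h2]
        rw [Amat_apply]
        rw [Fin.sum_univ_succ]
        rw [if_neg (fun hc => by
          have h := congrFun hc 0
          rw [incr_apply, if_pos rfl] at h
          omega), mul_zero, zero_add]
        have hS : (∑ t : Fin n, (((J.1 t.succ : ℂ) + 1) * ((m t.succ : ℂ) - (J.1 t.succ : ℂ)))
              * (if incr J.1 t.succ = I.1 then (1:ℂ) else 0))
            = ∑ t : Fin n, (((Fin.tail J.1 t : ℂ) + 1)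
                * ((Fin.tail m t : ℂ) - (Fin.tail J.1 t : ℂ)))
              * (if incr (Fin.tail J.1) t = Fin.tail I.1 then (1:ℂ) else 0) := by
          refine Finset.sum_congr rfl fun t _ => ?_
          simp only [incr_succ_iff J.1 I.1 t h2, Fin.tail]
        have he2 : ee (m 0) (I.1 0) = ee (m 0) (J.1 0) := by rw [h2]
        rw [hS, he2, mul_right_comm, inv_mul_cancel₀ (ee_ne_zero _ _), one_mul]
      · rw [dif_neg h2]
        rw [Finset.sum_eq_zero (fun i _ => by
          rw [if_neg, mul_zero]
          intro hc
          have h := congrFun hc 0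
          rw [incr_apply] at h
          split at h <;> omega), mul_zero, zero_mul]
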